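/- Let A ∈ ℝ^{n×n} be a non-singular tridiagonal matrix and X = A⁻¹, and let 2 ≤ k ≤ n. Suppose the lower-triangle column ratio q_k is infinite, i.e. there exists an index j with k ≤ j ≤ n such that x_{j,k} = 0 and x_{j,k-1} ≠ 0. Then x_{s,k} = 0 for all k ≤ s ≤ n, and x_{k,j'} = 0 for all k ≤ j' ≤ n. -/

import Mathlib

open Matrix

private def ext0 {n : ℕ} (m : ℕ) (w : Fin m → ℝ) : Fin n → ℝ :=
  fun i => if h : (i : ℕ) < m then w ⟨i, h⟩ else 0

private lemma ext0_castLE {n m : ℕ} (h : m ≤ n) (w : Fin m → ℝ) (t : Fin m) :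
    ext0 (n := n) m w (Fin.castLE h t) = w t := by
  simp [ext0]

private lemma ext0_of_le {n m : ℕ} (w : Fin m → ℝ) (t : Fin n) (h : m ≤ (t : ℕ)) :
    ext0 m w t = 0 := dif_neg (by omega)

private lemma sum_restrict {n m : ℕ} (h : m ≤ n) (f : Fin n → ℝ)
    (hf : ∀ t : Fin n, m ≤ (t : ℕ) → f t = 0) :
    ∑ t : Fin n, f t = ∑ t : Fin m, f (Fin.castLE h t) := by
  classical
  rw [show ∑ t : Fin m, f (Fin.castLE h t)
      = ∑ t ∈ Finset.univ.map ⟨Fin.castLE h, Fin.castLE_injective h⟩, f t from by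
      rw [Finset.sum_map]; rfl]
  refine (Finset.sum_subset (Finset.subset_univ _) ?_).symm
  intro t _ ht
  refine hf t ?_
  by_contra hlt
  push_neg at hlt
  exact ht (Finset.mem_map.mpr ⟨⟨(t : ℕ), hlt⟩, Finset.mem_univ _, Fin.ext rfl⟩)

private lemma mulVec_ext0_lt {n m : ℕ} (A : Matrix (Fin n) (Fin n) ℝ) (hmn : m ≤ n)
    (w : Fin m → ℝ) (s : Fin n) (hs : (s : ℕ) < m) :
    (A *ᵥ ext0 m w) s
      = ((A.submatrix (Fin.castLE hmn) (Fin.castLE hmn)) *ᵥ w) ⟨(s : ℕ), hs⟩ := by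
  simp only [Matrix.mulVec, dotProduct, Matrix.submatrix_apply]
  rw [sum_restrict hmn (fun t => A s t * ext0 m w t)
    (fun t ht => by rw [ext0_of_le _ _ ht, mul_zero])]
  exact Finset.sum_congr rfl fun t _ => by rw [ext0_castLE]; rfl

private lemma mulVec_ext0_gt {n : ℕ} (A : Matrix (Fin n) (Fin n) ℝ)
    (htri : ∀ i j : Fin n, ((i : ℕ) + 1 < (j : ℕ) ∨ (j : ℕ) + 1 < (i : ℕ)) → A i j = 0)
    (m : ℕ) (w : Fin m → ℝ) (s : Fin n) (hs : m < (s : ℕ)) :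
    (A *ᵥ ext0 m w) s = 0 := by
  simp only [Matrix.mulVec, dotProduct]
  refine Finset.sum_eq_zero fun t _ => ?_
  by_cases ht : (t : ℕ) < m
  · rw [htri s t (Or.inr (by omega)), zero_mul]
  · rw [ext0_of_le _ _ (by omega), mul_zero]

private lemma vecMul_ext0_lt {n m : ℕ} (A : Matrix (Fin n) (Fin n) ℝ) (hmn : m ≤ n)
    (w : Fin m → ℝ) (s : Fin n) (hs : (s : ℕ) < m) :
    (ext0 m w ᵥ* A) s
      = (w ᵥ* (A.submatrix (Fin.castLE hmn) (Fin.castLE hmn))) ⟨(s : ℕ), hs⟩ := by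
  simp only [Matrix.vecMul, dotProduct, Matrix.submatrix_apply]
  rw [sum_restrict hmn (fun t => ext0 m w t * A t s)
    (fun t ht => by rw [ext0_of_le _ _ ht, zero_mul])]
  exact Finset.sum_congr rfl fun t _ => by rw [ext0_castLE]; rfl

private lemma vecMul_ext0_gt {n : ℕ} (A : Matrix (Fin n) (Fin n) ℝ)
    (htri : ∀ i j : Fin n, ((i : ℕ) + 1 < (j : ℕ) ∨ (j : ℕ) + 1 < (i : ℕ)) → A i j = 0)
    (m : ℕ) (w : Fin m → ℝ) (s : Fin n) (hs : m < (s : ℕ)) :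
    (ext0 m w ᵥ* A) s = 0 := by
  simp only [Matrix.vecMul, dotProduct]
  refine Finset.sum_eq_zero fun t _ => ?_
  by_cases ht : (t : ℕ) < m
  · rw [htri t s (Or.inl (by omega)), mul_zero]
  · rw [ext0_of_le _ _ (by omega), zero_mul]

private lemma mk_ne_mk {n a b : ℕ} (ha : a < n) (hb : b < n) (h : a ≠ b) :
    (⟨a, ha⟩ : Fin n) ≠ ⟨b, hb⟩ := fun he => h (congrArg Fin.val he)

private lemma ne_mk {n a : ℕ} (s : Fin n) (ha : a < n) (h : (s : ℕ) ≠ a) :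
    s ≠ ⟨a, ha⟩ := fun he => h (congrArg Fin.val he)

private lemma mk_ne {n a : ℕ} (s : Fin n) (ha : a < n) (h : (s : ℕ) ≠ a) :
    (⟨a, ha⟩ : Fin n) ≠ s := fun he => h (congrArg Fin.val he).symm

private lemma mulVec_lincomb {n : ℕ} (A B : Matrix (Fin n) (Fin n) ℝ) (c : ℝ) (p q : Fin n) :
    A *ᵥ (fun t => B t p + c * B t q) = fun s => (A * B) s p + c * (A * B) s q := by
  funext s
  simp only [Matrix.mulVec, dotProduct, Matrix.mul_apply, mul_add,
    Finset.sum_add_distrib, Finset.mul_sum]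
  congr 1
  exact Finset.sum_congr rfl fun t _ => by ring

private lemma mulVec_smulcol {n : ℕ} (A B : Matrix (Fin n) (Fin n) ℝ) (c : ℝ) (q : Fin n) :
    A *ᵥ (fun t => c * B t q) = fun s => c * (A * B) s q := by
  funext s
  simp only [Matrix.mulVec, dotProduct, Matrix.mul_apply, Finset.mul_sum]
  exact Finset.sum_congr rfl fun t _ => by ring

private lemma vecMul_smulrow {n : ℕ} (A B : Matrix (Fin n) (Fin n) ℝ) (c : ℝ) (p : Fin n) :
    (fun t => c * B p t) ᵥ* A = fun s => c * (B * A) p s := by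
  funext s
  simp only [Matrix.vecMul, dotProduct, Matrix.mul_apply, Finset.mul_sum]
  exact Finset.sum_congr rfl fun t _ => by ring

/-- if the lower-triangle column ratio `q_k` of the inverse of a
non-singular tridiagonal matrix is infinite (some `x j k = 0` with `x j (k-1) ≠ 0`,
`k ≤ j ≤ n`), then the whole tail of column `k` and of row `k` of `X = A⁻¹` vanishes.
Entries are 1-based via `a`, `x`. -/
theorem inverse_zeros_of_infinite_column_ratio {n : ℕ}
    (A : Matrix (Fin n) (Fin n) ℝ) (a x : ℕ → ℕ → ℝ)
    (hAa : ∀ i j : Fin n, A i j = a ((i : ℕ) + 1) ((j : ℕ) + 1))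
    (hXx : ∀ i j : Fin n, A⁻¹ i j = x ((i : ℕ) + 1) ((j : ℕ) + 1))
    (htri : ∀ i j : Fin n, ((i : ℕ) + 1 < (j : ℕ) ∨ (j : ℕ) + 1 < (i : ℕ)) → A i j = 0)
    (hdet : IsUnit A.det)
    (k : ℕ) (hk1 : 2 ≤ k) (hkn : k ≤ n)
    (hq : ∃ j : ℕ, k ≤ j ∧ j ≤ n ∧ x j k = 0 ∧ x j (k - 1) ≠ 0) :
    (∀ s, k ≤ s → s ≤ n → x s k = 0) ∧ (∀ j, k ≤ j → j ≤ n → x k j = 0) := by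
  classical
  obtain ⟨j, hjk, hjn, hxjk, hxjk1⟩ := hq
  have hmn : k - 1 ≤ n := by omega
  have hkltn : k - 1 < n := by omega
  have hk2n : k - 2 < n := by omega
  have hk2m : k - 2 < k - 1 := by omega
  have hAX : A * A⁻¹ = 1 := Matrix.mul_nonsing_inv A hdet
  have hXA : A⁻¹ * A = 1 := Matrix.nonsing_inv_mul A hdet
  by_cases hA1 : IsUnit (A.submatrix (Fin.castLE hmn) (Fin.castLE hmn)).det
  · exfalso
    obtain ⟨w, hw⟩ : ∃ w, (A.submatrix (Fin.castLE hmn) (Fin.castLE hmn)) *ᵥ w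
        = Pi.single (⟨k - 2, hk2m⟩ : Fin (k - 1)) 1 :=
      ⟨(A.submatrix (Fin.castLE hmn) (Fin.castLE hmn))⁻¹ *ᵥ _, by
        rw [Matrix.mulVec_mulVec, Matrix.mul_nonsing_inv _ hA1, Matrix.one_mulVec]⟩
    obtain ⟨c, hc⟩ : ∃ c, (A *ᵥ ext0 (k - 1) w) ⟨k - 1, hkltn⟩ = c := ⟨_, rfl⟩
    have key : A *ᵥ ext0 (k - 1) w = fun s : Fin n =>
        (if s = ⟨k - 2, hk2n⟩ then (1 : ℝ) else 0)
          + c * (if s = ⟨k - 1, hkltn⟩ then 1 else 0) := by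
      funext s
      rcases lt_trichotomy ((s : ℕ)) (k - 1) with hs | hs | hs
      · rw [mulVec_ext0_lt A hmn w s hs, hw, Pi.single_apply,
          if_neg (ne_mk s hkltn (by omega)), mul_zero, add_zero]
        by_cases h2 : (s : ℕ) = k - 2
        · rw [if_pos (show (⟨(s : ℕ), hs⟩ : Fin (k - 1)) = ⟨k - 2, hk2m⟩ from Fin.ext h2),
            if_pos (show s = (⟨k - 2, hk2n⟩ : Fin n) from Fin.ext h2)]
        · rw [if_neg (show (⟨(s : ℕ), hs⟩ : Fin (k - 1)) ≠ ⟨k - 2, hk2m⟩ from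
              fun h => h2 (congrArg Fin.val h)),
            if_neg (ne_mk s hk2n h2)]
      · have hss : s = ⟨k - 1, hkltn⟩ := Fin.ext hs
        rw [hss, hc, if_neg (mk_ne_mk _ _ (by omega)), if_pos rfl, mul_one, zero_add]
      · rw [mulVec_ext0_gt A htri _ w s hs, if_neg (ne_mk s hk2n (by omega)),
          if_neg (ne_mk s hkltn (by omega)), mul_zero, add_zero]
    have h1 : A *ᵥ (fun t => A⁻¹ t ⟨k - 2, hk2n⟩ + c * A⁻¹ t ⟨k - 1, hkltn⟩)
        = A *ᵥ ext0 (k - 1) w := by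
      rw [mulVec_lincomb, hAX, key]
      funext s
      rw [Matrix.one_apply, Matrix.one_apply]
    have hz : (fun t => A⁻¹ t ⟨k - 2, hk2n⟩ + c * A⁻¹ t ⟨k - 1, hkltn⟩)
        = ext0 (k - 1) w := by
      have h2 := congrArg (fun v => A⁻¹ *ᵥ v) h1
      simpa only [Matrix.mulVec_mulVec, hXA, Matrix.one_mulVec] using h2
    have hj1 : j - 1 < n := by omega
    have h3 := congrFun hz ⟨j - 1, hj1⟩
    rw [ext0_of_le _ _ (show k - 1 ≤ j - 1 by omega)] at h3
    have e1 : A⁻¹ (⟨j - 1, hj1⟩ : Fin n) ⟨k - 2, hk2n⟩ = x j (k - 1) := by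
      rw [hXx]
      show x (j - 1 + 1) (k - 2 + 1) = x j (k - 1)
      rw [show j - 1 + 1 = j from by omega, show k - 2 + 1 = k - 1 from by omega]
    have e2 : A⁻¹ (⟨j - 1, hj1⟩ : Fin n) ⟨k - 1, hkltn⟩ = x j k := by
      rw [hXx]
      show x (j - 1 + 1) (k - 1 + 1) = x j k
      rw [show j - 1 + 1 = j from by omega, show k - 1 + 1 = k from by omega]
    rw [e1, e2, hxjk, mul_zero, add_zero] at h3
    exact hxjk1 h3
  · have hdet0 : (A.submatrix (Fin.castLE hmn) (Fin.castLE hmn)).det = 0 := by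
      by_contra h
      exact hA1 (isUnit_iff_ne_zero.mpr h)
    constructor
    · obtain ⟨w, hwne, hww⟩ := Matrix.exists_mulVec_eq_zero_iff.mpr hdet0
      obtain ⟨c, hc⟩ : ∃ c, (A *ᵥ ext0 (k - 1) w) ⟨k - 1, hkltn⟩ = c := ⟨_, rfl⟩
      have key : A *ᵥ ext0 (k - 1) w
          = fun s : Fin n => c * (if s = ⟨k - 1, hkltn⟩ then 1 else 0) := by
        funext s
        rcases lt_trichotomy ((s : ℕ)) (k - 1) with hs | hs | hs
        · rw [mulVec_ext0_lt A hmn w s hs, hww, if_neg (ne_mk s hkltn (by omega)), mul_zero]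
          rfl
        · have hss : s = ⟨k - 1, hkltn⟩ := Fin.ext hs
          rw [hss, hc, if_pos rfl, mul_one]
        · rw [mulVec_ext0_gt A htri _ w s hs, if_neg (ne_mk s hkltn (by omega)), mul_zero]
      have h1 : A *ᵥ ext0 (k - 1) w = A *ᵥ (fun t => c * A⁻¹ t ⟨k - 1, hkltn⟩) := by
        rw [key, mulVec_smulcol, hAX]
        funext s
        rw [Matrix.one_apply]
      have hz : ext0 (k - 1) w = (fun t => c * A⁻¹ t ⟨k - 1, hkltn⟩) := by
        have h2 := congrArg (fun v => A⁻¹ *ᵥ v) h1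
        simpa only [Matrix.mulVec_mulVec, hXA, Matrix.one_mulVec] using h2
      have hc0 : c ≠ 0 := fun h0 => hwne (funext fun i => by
        have h3 := congrFun hz (Fin.castLE hmn i)
        rw [ext0_castLE] at h3
        simpa [h0] using h3)
      intro s hsk hsn
      have hs1 : s - 1 < n := by omega
      have h3 := congrFun hz ⟨s - 1, hs1⟩
      rw [ext0_of_le _ _ (show k - 1 ≤ s - 1 by omega)] at h3
      have h4 : A⁻¹ (⟨s - 1, hs1⟩ : Fin n) ⟨k - 1, hkltn⟩ = 0 := by
        rcases mul_eq_zero.mp h3.symm with h | h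
        · exact absurd h hc0
        · exact h
      rw [hXx] at h4
      have e1 : x s k = x (s - 1 + 1) (k - 1 + 1) := by
        rw [show s - 1 + 1 = s from by omega, show k - 1 + 1 = k from by omega]
      rw [e1]
      exact h4
    · obtain ⟨w, hwne, hww⟩ := Matrix.exists_vecMul_eq_zero_iff.mpr hdet0
      obtain ⟨c, hc⟩ : ∃ c, (ext0 (k - 1) w ᵥ* A) ⟨k - 1, hkltn⟩ = c := ⟨_, rfl⟩
      have key : ext0 (k - 1) w ᵥ* A
          = fun s : Fin n => c * (if (⟨k - 1, hkltn⟩ : Fin n) = s then 1 else 0) := by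
        funext s
        rcases lt_trichotomy ((s : ℕ)) (k - 1) with hs | hs | hs
        · rw [vecMul_ext0_lt A hmn w s hs, hww, if_neg (mk_ne s hkltn (by omega)), mul_zero]
          rfl
        · have hss : s = ⟨k - 1, hkltn⟩ := Fin.ext hs
          rw [hss, hc, if_pos rfl, mul_one]
        · rw [vecMul_ext0_gt A htri _ w s hs, if_neg (mk_ne s hkltn (by omega)), mul_zero]
      have h1 : ext0 (k - 1) w ᵥ* A = (fun t => c * A⁻¹ ⟨k - 1, hkltn⟩ t) ᵥ* A := by
        rw [key, vecMul_smulrow, hXA]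
        funext s
        rw [Matrix.one_apply]
      have hz : ext0 (k - 1) w = (fun t => c * A⁻¹ ⟨k - 1, hkltn⟩ t) := by
        have h2 := congrArg (fun v => v ᵥ* A⁻¹) h1
        simpa only [Matrix.vecMul_vecMul, hAX, Matrix.vecMul_one] using h2
      have hc0 : c ≠ 0 := fun h0 => hwne (funext fun i => by
        have h3 := congrFun hz (Fin.castLE hmn i)
        rw [ext0_castLE] at h3
        simpa [h0] using h3)
      intro j' hj'k hj'n
      have hj'1 : j' - 1 < n := by omega
      have h3 := congrFun hz ⟨j' - 1, hj'1⟩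
      rw [ext0_of_le _ _ (show k - 1 ≤ j' - 1 by omega)] at h3
      have h4 : A⁻¹ (⟨k - 1, hkltn⟩ : Fin n) ⟨j' - 1, hj'1⟩ = 0 := by
        rcases mul_eq_zero.mp h3.symm with h | h
        · exact absurd h hc0
        · exact h
      rw [hXx] at h4
      have e1 : x k j' = x (k - 1 + 1) (j' - 1 + 1) := by
        rw [show k - 1 + 1 = k from by omega, show j' - 1 + 1 = j' from by omega]
      rw [e1]
      exact h4
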